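/- arXiv:1207.7270 — 9 statements merged into one kernel-verified Lean document; each statement's English description precedes it below -/
import Mathlib

section
/- Let (X,d) and (Y,e) be metric spaces, D ⊆ X, θ : D → Y, and let A ⊆ X, B ⊆ Y be dense subsets. If there exists an A,B-approximation system S for θ, then θ is continuous on D. -/
def IsApproxSystem {X Y : Type*} [MetricSpace X] [MetricSpace Y]
    (A : Set X) (B : Set Y) (D : Set X) (θ : X → Y)
    (S : Set (X × ℕ × Y × ℕ)) : Prop :=
  (∀ p ∈ S, p.1 ∈ A ∧ p.2.2.1 ∈ B) ∧
  ∀ ξ ∈ D,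
    (∀ (a : X) (m : ℕ) (b : Y) (n : ℕ), (a, m, b, n) ∈ S →
      dist a ξ < 1 / (m + 1) → dist b (θ ξ) < 1 / (n + 1)) ∧
    (∀ n : ℕ, ∃ m : ℕ, ∀ a ∈ A, dist a ξ < 1 / (m + 1) →
      ∃ b ∈ B, (a, m, b, n) ∈ S)

theorem approx_system_implies_continuousOn
    {X Y : Type*} [MetricSpace X] [MetricSpace Y]
    (A : Set X) (B : Set Y) (hA : Dense A) (hB : Dense B)
    (D : Set X) (θ : X → Y) (S : Set (X × ℕ × Y × ℕ))
    (hS : IsApproxSystem A B D θ S) :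
    ContinuousOn θ D := by
  rw [Metric.continuousOn_iff]
  intro ξ hξ ε hε
  obtain ⟨n, hn⟩ := exists_nat_one_div_lt (show (0:ℝ) < ε / 2 by linarith)
  obtain ⟨h1ξ, h2ξ⟩ := hS.2 ξ hξ
  obtain ⟨m, hm⟩ := h2ξ n
  have hmpos : (0:ℝ) < 1 / (m + 1) := by positivity
  refine ⟨1 / (2 * (m + 1)), by positivity, fun η hη hdist => ?_⟩
  obtain ⟨a, haA, haball⟩ := hA.exists_mem_open (Metric.isOpen_ball (x := ξ) (ε := 1 / (2 * (m + 1))))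
    ⟨ξ, Metric.mem_ball_self (by positivity)⟩
  have haξ : dist a ξ < 1 / (2 * (m + 1)) := Metric.mem_ball.mp haball
  have haξ' : dist a ξ < 1 / (m + 1) := by
    refine haξ.trans ?_
    rw [div_lt_div_iff₀ (by positivity) (by positivity)]
    nlinarith [Nat.cast_nonneg (α := ℝ) m]
  have haη : dist a η < 1 / (m + 1) := by
    calc dist a η ≤ dist a ξ + dist ξ η := dist_triangle a ξ η
    _ < 1 / (2 * (m + 1)) + 1 / (2 * (m + 1)) := by
        rw [dist_comm ξ η]; linarith
    _ = 1 / (m + 1) := by rw [← two_mul]; field_simp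
  obtain ⟨b, hbB, hbS⟩ := hm a haA haξ'
  have hbξ : dist b (θ ξ) < 1 / (n + 1) := h1ξ a m b n hbS haξ'
  obtain ⟨h1η, _⟩ := hS.2 η hη
  have hbη : dist b (θ η) < 1 / (n + 1) := h1η a m b n hbS haη
  calc dist (θ η) (θ ξ) ≤ dist (θ η) b + dist b (θ ξ) := dist_triangle _ _ _
  _ < 1 / (n + 1) + 1 / (n + 1) := by rw [dist_comm (θ η) b]; linarith
  _ < ε := by push_cast at hn ⊢; linarith
end

section
/- Let (X,d) and (Y,e) be metric spaces, D ⊆ X, θ : D → Y continuous on D, and let A ⊆ X, B ⊆ Y be dense subsets. Then the set S of all (a,m,b,n) ∈ A × ℕ × B × ℕ satisfying: for all ξ ∈ D, d(a,ξ) < 1/(m+1) implies e(b,θ(ξ)) < 1/(n+1), is an A,B-approximation system for θ. -/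
theorem maximal_set_is_approx_system
    {X Y : Type*} [MetricSpace X] [MetricSpace Y]
    (A : Set X) (B : Set Y) (hA : Dense A) (hB : Dense B)
    (D : Set X) (θ : X → Y) (hθ : ContinuousOn θ D) :
    IsApproxSystem A B D θ
      {p : X × ℕ × Y × ℕ | p.1 ∈ A ∧ p.2.2.1 ∈ B ∧
        ∀ ξ ∈ D, dist p.1 ξ < 1 / (p.2.1 + 1) →
          dist p.2.2.1 (θ ξ) < 1 / (p.2.2.2 + 1)} := by
  constructor
  · rintro p ⟨ha, hb, -⟩
    exact ⟨ha, hb⟩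
  · intro ξ hξ
    constructor
    · rintro a m b n ⟨-, -, h⟩ hd
      exact h ξ hξ hd
    · intro n
      have hε : (0 : ℝ) < 1 / (2 * (n + 1)) := by positivity
      obtain ⟨δ, hδ, hδ'⟩ := Metric.continuousOn_iff.mp hθ ξ hξ _ hε
      obtain ⟨m, hm⟩ := exists_nat_one_div_lt (show (0:ℝ) < δ / 2 by linarith)
      refine ⟨m, fun a haA hd => ?_⟩
      obtain ⟨b, hb, hbB⟩ := Metric.dense_iff.mp hB (θ ξ) _ hε
      refine ⟨b, hbB, haA, hbB, fun ζ hζ hζd => ?_⟩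
      have h1 : dist ζ ξ < δ := by
        have ht := dist_triangle ζ a ξ
        rw [dist_comm ζ a] at ht
        linarith
      have h2 := hδ' ζ hζ h1
      have h3 : dist b (θ ξ) < 1 / (2 * (n + 1)) := Metric.mem_ball.mp hb
      calc dist b (θ ζ) ≤ dist b (θ ξ) + dist (θ ζ) (θ ξ) := by
            rw [dist_comm (θ ζ) (θ ξ)]; exact dist_triangle _ _ _
        _ < 1 / (2 * (n + 1)) + 1 / (2 * (n + 1)) := by linarith
        _ = 1 / (n + 1) := by field_simp; ring_nf
end

section
/- Let (X,d) and (Y,e) be metric spaces, D ⊆ X, θ : D → Y, and A ⊆ X, B ⊆ Y dense subsets. Then θ is continuous on D if and only if there exists an A,B-approximation system for θ. -/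
theorem continuousOn_iff_exists_approx_system
    {X Y : Type*} [MetricSpace X] [MetricSpace Y]
    (A : Set X) (B : Set Y) (hA : Dense A) (hB : Dense B)
    (D : Set X) (θ : X → Y) :
    ContinuousOn θ D ↔ ∃ S : Set (X × ℕ × Y × ℕ), IsApproxSystem A B D θ S := by
  constructor
  · intro hθ
    refine ⟨{p | p.1 ∈ A ∧ p.2.2.1 ∈ B ∧ ∀ ξ ∈ D, dist p.1 ξ < 1/(p.2.1+1) →
      dist p.2.2.1 (θ ξ) < 1/(p.2.2.2+1)}, ?_, ?_⟩
    · intro p hp; exact ⟨hp.1, hp.2.1⟩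
    · intro ξ hξ
      refine ⟨fun a m b n hS hd => hS.2.2 ξ hξ hd, ?_⟩
      intro n
      have hnpos : (0:ℝ) < 1/(2*((n:ℝ)+1)) := by positivity
      obtain ⟨δ, hδ, hδ'⟩ := Metric.continuousOn_iff.mp hθ ξ hξ _ hnpos
      obtain ⟨m, hm⟩ := exists_nat_one_div_lt (show (0:ℝ) < δ/2 by linarith)
      refine ⟨m, ?_⟩
      intro a ha hd
      obtain ⟨b, hb, hbd⟩ := hB.exists_dist_lt (θ ξ) hnpos
      refine ⟨b, hb, ha, hb, ?_⟩
      intro ξ' hξ' hd'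
      have h1 : dist ξ' ξ < δ := by
        have := dist_triangle ξ' a ξ
        have hcomm : dist ξ' a = dist a ξ' := dist_comm _ _
        have hm' : (1:ℝ)/(m+1) < δ/2 := hm
        calc dist ξ' ξ ≤ dist ξ' a + dist a ξ := dist_triangle _ _ _
          _ < δ/2 + δ/2 := by rw [hcomm]; exact add_lt_add (lt_trans hd' hm') (lt_trans hd hm')
          _ = δ := by ring
      have h2 : dist (θ ξ') (θ ξ) < 1/(2*((n:ℝ)+1)) := hδ' ξ' hξ' h1
      have h3 : dist b (θ ξ') ≤ dist b (θ ξ) + dist (θ ξ) (θ ξ') := dist_triangle _ _ _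
      rw [dist_comm (θ ξ) b] at hbd
      rw [dist_comm (θ ξ) (θ ξ')] at h3
      have : (1:ℝ)/(2*((n:ℝ)+1)) + 1/(2*((n:ℝ)+1)) = 1/((n:ℝ)+1) := by
        field_simp; norm_num
      push_cast
      linarith
  · rintro ⟨S, hmem, hS⟩
    rw [Metric.continuousOn_iff]
    intro ξ hξ ε hε
    obtain ⟨n, hn⟩ := exists_nat_one_div_lt (show (0:ℝ) < ε/2 by linarith)
    obtain ⟨h1, h2⟩ := hS ξ hξ
    obtain ⟨m, hm⟩ := h2 n
    refine ⟨1/(2*((m:ℝ)+1)), by positivity, ?_⟩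
    intro ξ' hξ' hd
    have hmpos : (0:ℝ) < 1/(2*((m:ℝ)+1)) := by positivity
    obtain ⟨a, ha, had⟩ := hA.exists_dist_lt ξ' hmpos
    rw [dist_comm ξ' a] at had
    have haξ : dist a ξ < 1/((m:ℝ)+1) := by
      calc dist a ξ ≤ dist a ξ' + dist ξ' ξ := dist_triangle _ _ _
        _ < 1/(2*((m:ℝ)+1)) + 1/(2*((m:ℝ)+1)) := add_lt_add had hd
        _ = 1/((m:ℝ)+1) := by field_simp; norm_num
    obtain ⟨b, hb, hbS⟩ := hm a ha (by push_cast; exact haξ)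
    have hbξ : dist b (θ ξ) < 1/((n:ℝ)+1) := by
      have := h1 a m b n hbS (by push_cast; exact haξ)
      push_cast at this; exact this
    have hbξ' : dist b (θ ξ') < 1/((n:ℝ)+1) := by
      have := (hS ξ' hξ').1 a m b n hbS
        (by push_cast; exact lt_trans had (by rw [div_lt_div_iff₀ (by positivity) (by positivity)]; nlinarith [Nat.cast_nonneg (α := ℝ) m]))
      push_cast at this; exact this
    have := dist_triangle (θ ξ') b (θ ξ)
    rw [dist_comm (θ ξ') b] at this
    linarith
end

section
/- Let (X,d) and (Y,e) be metric spaces, D ⊆ X, θ : D → Y continuous on D, and A ⊆ X, B ⊆ Y dense. Then the maximal A,B-approximation system M (the set of all (a,m,b,n) ∈ A × ℕ × B × ℕ such that d(a,ξ) < 1/(m+1) implies e(b,θ(ξ)) < 1/(n+1) for all ξ ∈ D) satisfies the stronger condition: for every ξ ∈ D and every n ∈ ℕ there exist m ∈ ℕ and b ∈ B such that for every a ∈ A with d(a,ξ) < 1/(m+1), (a,m,b,n) ∈ M. -/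
theorem maximal_system_strong_condition
    {X Y : Type*} [MetricSpace X] [MetricSpace Y]
    (A : Set X) (B : Set Y) (hA : Dense A) (hB : Dense B)
    (D : Set X) (θ : X → Y) (hθ : ContinuousOn θ D)
    (M : Set (X × ℕ × Y × ℕ))
    (hM : M = {p : X × ℕ × Y × ℕ | p.1 ∈ A ∧ p.2.2.1 ∈ B ∧
        ∀ ξ ∈ D, dist p.1 ξ < 1 / (p.2.1 + 1) →
          dist p.2.2.1 (θ ξ) < 1 / (p.2.2.2 + 1)}) :
    ∀ ξ ∈ D, ∀ n : ℕ, ∃ m : ℕ, ∃ b ∈ B,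
      ∀ a ∈ A, dist a ξ < 1 / (m + 1) → (a, m, b, n) ∈ M := by
  intro ξ hξ n
  set r : ℝ := 1 / (2 * (n + 1)) with hr
  have hrpos : 0 < r := by positivity
  obtain ⟨b, hbd, hbB⟩ := Metric.dense_iff.mp hB (θ ξ) r hrpos
  rw [Metric.mem_ball] at hbd
  obtain ⟨δ, hδpos, hδ⟩ := Metric.continuousWithinAt_iff.mp (hθ ξ hξ) r hrpos
  obtain ⟨m, hm⟩ := exists_nat_gt (2 / δ)
  have hmδ : 2 / ((m : ℝ) + 1) < δ := by
    rw [div_lt_iff₀ (by positivity)]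
    rw [div_lt_iff₀ hδpos] at hm
    nlinarith
  refine ⟨m, b, hbB, fun a haA had => ?_⟩
  rw [hM]
  refine ⟨haA, hbB, fun η hη hdaη => ?_⟩
  simp only at hdaη had ⊢
  have hηξ : dist η ξ < δ := by
    calc dist η ξ ≤ dist η a + dist a ξ := dist_triangle _ _ _
    _ < 1 / ((m : ℝ) + 1) + 1 / ((m : ℝ) + 1) := by
        rw [dist_comm]; exact add_lt_add hdaη had
    _ = 2 / ((m : ℝ) + 1) := by ring
    _ < δ := hmδ
  have h2 : dist (θ η) (θ ξ) < r := hδ hη hηξ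
  calc dist b (θ η) ≤ dist b (θ ξ) + dist (θ ξ) (θ η) := dist_triangle _ _ _
  _ < r + r := add_lt_add hbd (by rwa [dist_comm])
  _ = 1 / ((n : ℝ) + 1) := by
      rw [hr, ← add_div, div_eq_div_iff (by positivity) (by positivity)]; ring
end

section
/- Let X = ℝ², equipped with the sup metric d((ξ₁,ξ₂),(ξ₁',ξ₂')) = max(|ξ₁−ξ₁'|,|ξ₂−ξ₂'|), let Y = ℝ with the usual metric, D = ℝ × (ℝ \ {0}), and θ(ξ₁,ξ₂) = ξ₁/ξ₂. Let S be the set of all ((a₁,a₂),m,b,n) ∈ ℚ² × ℕ × ℚ × ℕ such that a₂·b = a₁ and (m+1)·|a₂| ≥ 1 + (n+1)·(|b|+1). Then S is a ℚ²,ℚ-approximation system for θ. -/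
theorem division_approx_system :
    IsApproxSystem
      (A := {p : ℝ × ℝ | ∃ q₁ q₂ : ℚ, p = ((q₁ : ℝ), (q₂ : ℝ))})
      (B := Set.range ((↑) : ℚ → ℝ))
      (D := {p : ℝ × ℝ | p.2 ≠ 0})
      (θ := fun p => p.1 / p.2)
      {q : (ℝ × ℝ) × ℕ × ℝ × ℕ | ∃ a₁ a₂ b : ℚ,
        q.1 = ((a₁ : ℝ), (a₂ : ℝ)) ∧ q.2.2.1 = (b : ℝ) ∧
        a₂ * b = a₁ ∧ ((q.2.1 : ℚ) + 1) * |a₂| ≥ 1 + ((q.2.2.2 : ℚ) + 1) * (|b| + 1)} := by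
  constructor
  · rintro ⟨a, m, b, n⟩ ⟨a₁, a₂, bq, ha, hb, -, -⟩
    exact ⟨⟨a₁, a₂, ha⟩, ⟨bq, hb.symm⟩⟩
  · rintro ⟨ξ₁, ξ₂⟩ hξ
    simp only [Set.mem_setOf_eq] at hξ
    constructor
    · rintro a m b n ⟨a₁, a₂, bq, ha, hb, hab, hineq⟩ hdist
      simp only at ha hb
      subst ha hb
      rw [Prod.dist_eq, max_lt_iff] at hdist
      obtain ⟨h1, h2⟩ := hdist
      rw [Real.dist_eq] at h1 h2
      simp only at h1 h2
      -- cast the key inequality to ℝ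
      have hineqR : ((m : ℝ) + 1) * |(a₂ : ℝ)| ≥ 1 + ((n : ℝ) + 1) * (|(bq : ℝ)| + 1) := by
        exact_mod_cast hineq
      have habR : (a₂ : ℝ) * (bq : ℝ) = (a₁ : ℝ) := by exact_mod_cast hab
      have hm : (0 : ℝ) < (m : ℝ) + 1 := by positivity
      have hn : (0 : ℝ) < (n : ℝ) + 1 := by positivity
      set ε : ℝ := 1 / ((m : ℝ) + 1) with hε
      have hεpos : 0 < ε := by positivity
      -- |ξ₂| > ε * (n+1) * (|bq|+1)
      have hεm : ε * ((m : ℝ) + 1) = 1 := by rw [hε]; field_simp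
      have ha₂ : |(a₂ : ℝ)| ≥ ε * (1 + ((n : ℝ) + 1) * (|(bq : ℝ)| + 1)) := by
        have h' : ε * (((m : ℝ) + 1) * |(a₂ : ℝ)|) = |(a₂ : ℝ)| := by
          rw [← mul_assoc, hεm, one_mul]
        linarith [mul_le_mul_of_nonneg_left hineqR hεpos.le, h']
      have hξ₂abs : |ξ₂| > ε * (((n : ℝ) + 1) * (|(bq : ℝ)| + 1)) := by
        have : |(a₂ : ℝ)| - |(a₂ : ℝ) - ξ₂| ≤ |ξ₂| := by
          have := abs_sub_abs_le_abs_sub (a₂ : ℝ) ξ₂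
          linarith
        nlinarith [mul_pos hεpos hεpos]
      have hξ₂pos : 0 < |ξ₂| := lt_of_le_of_lt (by positivity) hξ₂abs
      have hξ₂ne : ξ₂ ≠ 0 := fun h => by simp [h] at hξ₂pos
      -- numerator bound
      have hnum : |(bq : ℝ) * ξ₂ - ξ₁| < (|(bq : ℝ)| + 1) * ε := by
        have heq : (bq : ℝ) * ξ₂ - ξ₁ = (bq : ℝ) * (ξ₂ - (a₂ : ℝ)) + ((a₁ : ℝ) - ξ₁) := by
          rw [← habR]; ring
        rw [heq]
        calc |(bq : ℝ) * (ξ₂ - (a₂ : ℝ)) + ((a₁ : ℝ) - ξ₁)|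
            ≤ |(bq : ℝ)| * |ξ₂ - (a₂ : ℝ)| + |(a₁ : ℝ) - ξ₁| := by
              refine (abs_add_le _ _).trans ?_
              rw [abs_mul]
          _ < (|(bq : ℝ)| + 1) * ε := by
              have h2' : |ξ₂ - (a₂ : ℝ)| < ε := by rw [abs_sub_comm]; exact h2
              nlinarith [abs_nonneg (bq : ℝ), abs_nonneg (ξ₂ - (a₂ : ℝ))]
      rw [Real.dist_eq]
      simp only
      have : (bq : ℝ) - ξ₁ / ξ₂ = ((bq : ℝ) * ξ₂ - ξ₁) / ξ₂ := by
        field_simp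
      rw [this, abs_div, div_lt_div_iff₀ hξ₂pos hn, one_mul]
      calc |(bq : ℝ) * ξ₂ - ξ₁| * ((n : ℝ) + 1) < (|(bq : ℝ)| + 1) * ε * ((n : ℝ) + 1) := by
            exact mul_lt_mul_of_pos_right hnum hn
        _ ≤ |ξ₂| * 1 := by rw [mul_one]; nlinarith
        _ = |ξ₂| := mul_one _
    · intro n
      set δ : ℝ := |ξ₂| with hδ
      have hδpos : 0 < δ := abs_pos.mpr hξ
      set C : ℝ := (2 / δ) * (1 + ((n : ℝ) + 1) * (2 * (|ξ₁| + 1) / δ + 1)) with hC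
      have hCpos : 0 < C := by positivity
      obtain ⟨m, hm⟩ := exists_nat_ge C
      refine ⟨m, ?_⟩
      rintro a ⟨q₁, q₂, rfl⟩ hdist
      rw [Prod.dist_eq, max_lt_iff] at hdist
      obtain ⟨h1, h2⟩ := hdist
      rw [Real.dist_eq] at h1 h2
      simp only at h1 h2
      have hm1 : (0 : ℝ) < (m : ℝ) + 1 := by positivity
      have hbrk : (1 : ℝ) ≤ 1 + ((n : ℝ) + 1) * (2 * (|ξ₁| + 1) / δ + 1) := by
        have : (0:ℝ) ≤ ((n : ℝ) + 1) * (2 * (|ξ₁| + 1) / δ + 1) := by positivity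
        linarith
      have hm2δ : 2 / δ ≤ (m : ℝ) + 1 := by
        have : 2 / δ ≤ C := by
          rw [hC]
          nlinarith [div_pos (by norm_num : (0:ℝ) < 2) hδpos]
        linarith
      have hεδ : 1 / ((m : ℝ) + 1) ≤ δ / 2 := by
        rw [div_le_div_iff₀ hm1 (by norm_num : (0:ℝ) < 2)]
        rw [div_le_iff₀ hδpos] at hm2δ
        linarith
      -- |q₂| ≥ δ/2
      have hq₂ : |(q₂ : ℝ)| ≥ δ / 2 := by
        have : δ - |(q₂ : ℝ) - ξ₂| ≤ |(q₂ : ℝ)| := by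
          have := abs_sub_abs_le_abs_sub ξ₂ (q₂ : ℝ)
          rw [abs_sub_comm] at this
          linarith
        have h2' : |(q₂ : ℝ) - ξ₂| < δ / 2 := lt_of_lt_of_le h2 hεδ
        linarith
      have hq₂pos : 0 < |(q₂ : ℝ)| := lt_of_lt_of_le (by positivity) hq₂
      have hq₂ne : q₂ ≠ 0 := by
        intro h; rw [h] at hq₂pos; simp at hq₂pos
      -- |q₁| ≤ |ξ₁| + 1
      have hq₁ : |(q₁ : ℝ)| ≤ |ξ₁| + 1 := by
        have : |(q₁ : ℝ)| - |ξ₁| ≤ |(q₁ : ℝ) - ξ₁| := abs_sub_abs_le_abs_sub _ _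
        have hε1 : 1 / ((m : ℝ) + 1) ≤ 1 := by
          rw [div_le_one hm1]; linarith [Nat.cast_nonneg (α := ℝ) m]
        linarith
      refine ⟨(q₁ / q₂ : ℚ), ⟨_, rfl⟩, q₁, q₂, q₁ / q₂, rfl, rfl, ?_, ?_⟩
      · field_simp
      · -- the inequality, proved in ℝ then cast to ℚ
        have hbR : |((q₁ / q₂ : ℚ) : ℝ)| ≤ 2 * (|ξ₁| + 1) / δ := by
          push_cast
          rw [abs_div, div_le_div_iff₀ hq₂pos hδpos]
          have h1' : |(q₁ : ℝ)| * δ ≤ (|ξ₁| + 1) * δ :=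
            mul_le_mul_of_nonneg_right hq₁ (le_of_lt hδpos)
          nlinarith [mul_le_mul_of_nonneg_left hq₂ (by positivity : (0:ℝ) ≤ 2 * (|ξ₁| + 1))]
        have key : ((m : ℝ) + 1) * |((q₂ : ℚ) : ℝ)| ≥
            1 + ((n : ℝ) + 1) * (|((q₁ / q₂ : ℚ) : ℝ)| + 1) := by
          have hCm : C ≤ (m : ℝ) + 1 := by linarith
          have step1 : C * (δ / 2) = 1 + ((n : ℝ) + 1) * (2 * (|ξ₁| + 1) / δ + 1) := by
            rw [hC]; field_simp
          have step2 : C * (δ / 2) ≤ ((m : ℝ) + 1) * |(q₂ : ℝ)| := by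
            have := mul_le_mul hCm hq₂ (by positivity) (le_of_lt hm1)
            linarith
          have step3 : 1 + ((n : ℝ) + 1) * (|((q₁ / q₂ : ℚ) : ℝ)| + 1) ≤
              1 + ((n : ℝ) + 1) * (2 * (|ξ₁| + 1) / δ + 1) := by
            have : (0:ℝ) ≤ (n : ℝ) + 1 := by positivity
            nlinarith
          linarith
        exact_mod_cast key
end

section
/- Let (ξ₁,ξ₂) ∈ ℝ × (ℝ \ {0}), and let (a₁,a₂) ∈ ℚ², b ∈ ℚ, m,n ∈ ℕ satisfy a₂·b = a₁, (m+1)·|a₂| ≥ 1 + (n+1)·(|b|+1), |a₁−ξ₁| < 1/(m+1), and |a₂−ξ₂| < 1/(m+1). Then |b − ξ₁/ξ₂| < 1/(n+1). -/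
theorem division_soundness (ξ₁ ξ₂ : ℝ) (hξ₂ : ξ₂ ≠ 0)
    (a₁ a₂ b : ℚ) (m n : ℕ)
    (hab : a₂ * b = a₁)
    (hge : ((m : ℚ) + 1) * |a₂| ≥ 1 + ((n : ℚ) + 1) * (|b| + 1))
    (h1 : |(a₁ : ℝ) - ξ₁| < 1 / (m + 1))
    (h2 : |(a₂ : ℝ) - ξ₂| < 1 / (m + 1)) :
    |(b : ℝ) - ξ₁ / ξ₂| < 1 / (n + 1) := by
  have hm : (0:ℝ) < (m:ℝ) + 1 := by positivity
  have hn : (0:ℝ) < (n:ℝ) + 1 := by positivity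
  have habR : (a₂:ℝ) * b = a₁ := by exact_mod_cast hab
  have hgeR : ((m:ℝ) + 1) * |(a₂:ℝ)| ≥ 1 + ((n:ℝ) + 1) * (|(b:ℝ)| + 1) := by
    push_cast [← Rat.cast_abs]
    exact_mod_cast hge
  set ε : ℝ := 1 / ((m:ℝ) + 1) with hεdef
  have hε : 0 < ε := by positivity
  -- |a₂| ≥ ε * (1 + (n+1)(|b|+1))
  have ha2 : |(a₂:ℝ)| ≥ ε * (1 + ((n:ℝ) + 1) * (|(b:ℝ)| + 1)) := by
    rw [hεdef, div_mul_eq_mul_div, one_mul, ge_iff_le, div_le_iff₀ hm]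
    linarith [hgeR]
  have hbnn : (0:ℝ) ≤ |(b:ℝ)| := abs_nonneg _
  -- lower bound on |ξ₂|
  have hξ2lb : |ξ₂| > ε * (((n:ℝ) + 1) * (|(b:ℝ)| + 1)) := by
    have : |(a₂:ℝ)| - |ξ₂| ≤ |(a₂:ℝ) - ξ₂| := abs_sub_abs_le_abs_sub _ _
    nlinarith [h2, ha2]
  have hξ2pos : 0 < |ξ₂| := by
    have : 0 < ε * (((n:ℝ) + 1) * (|(b:ℝ)| + 1)) := by positivity
    linarith
  have key : (b:ℝ) - ξ₁ / ξ₂ = ((b:ℝ) * (ξ₂ - a₂) + ((a₁:ℝ) - ξ₁)) / ξ₂ := by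
    field_simp
    linarith [habR]
  rw [key, abs_div]
  rw [div_lt_iff₀ hξ2pos]
  have hnum : |(b:ℝ) * (ξ₂ - a₂) + ((a₁:ℝ) - ξ₁)| < ε * (|(b:ℝ)| + 1) := by
    calc |(b:ℝ) * (ξ₂ - a₂) + ((a₁:ℝ) - ξ₁)|
        ≤ |(b:ℝ)| * |ξ₂ - a₂| + |(a₁:ℝ) - ξ₁| := by
          refine (abs_add_le _ _).trans ?_
          rw [abs_mul]
      _ < ε * (|(b:ℝ)| + 1) := by
          rw [abs_sub_comm] at h2
          nlinarith [abs_nonneg ((a₁:ℝ) - ξ₁), abs_nonneg (ξ₂ - (a₂:ℝ))]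
  have h1n1 : (0:ℝ) < 1 / ((n:ℝ) + 1) := by positivity
  calc |(b:ℝ) * (ξ₂ - a₂) + ((a₁:ℝ) - ξ₁)| < ε * (|(b:ℝ)| + 1) := hnum
    _ ≤ 1 / ((n:ℝ) + 1) * (ε * (((n:ℝ) + 1) * (|(b:ℝ)| + 1))) := le_of_eq (by
        field_simp)
    _ < 1 / ((n:ℝ) + 1) * |ξ₂| := by
        exact mul_lt_mul_of_pos_left hξ2lb h1n1
end

section
/- For k ∈ ℕ let S_k be the set of all (a,m,b,n) ∈ ℚ × ℕ × ℚ × ℕ such that a² ≤ (2k+1)(2k+2) and |b − σ_k(a)| + a^{2k}/(2·(2k)!) + 1/(m+1) ≤ 1/(n+1), where σ_k(a) = (−1)^k · a^{2k}/(2·(2k)!) + Σ_{i<k} (−1)^i · a^{2i}/(2i)!. Then ⋃_{k∈ℕ} S_k is a ℚ,ℚ-approximation system for the cosine function cos : ℝ → ℝ. -/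
noncomputable def sigmaCos (k : ℕ) (a : ℚ) : ℝ :=
  (-1 : ℝ) ^ k * (a : ℝ) ^ (2 * k) / (2 * (2 * k).factorial) +
    ∑ i ∈ Finset.range k, (-1 : ℝ) ^ i * (a : ℝ) ^ (2 * i) / (2 * i).factorial

lemma cos_lipschitz (x y : ℝ) : |Real.cos x - Real.cos y| ≤ |x - y| := by
  rw [Real.cos_sub_cos]
  have h1 : |Real.sin ((x + y) / 2)| ≤ 1 :=
    abs_le.2 ⟨Real.neg_one_le_sin _, Real.sin_le_one _⟩
  have h2 : |Real.sin ((x - y) / 2)| ≤ |(x - y) / 2| := Real.abs_sin_le_abs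
  calc |(-2) * Real.sin ((x + y) / 2) * Real.sin ((x - y) / 2)|
      = 2 * |Real.sin ((x + y) / 2)| * |Real.sin ((x - y) / 2)| := by
        rw [abs_mul, abs_mul]; norm_num
    _ ≤ 2 * 1 * |(x - y) / 2| := by
        gcongr
    _ = |x - y| := by rw [abs_div, abs_two]; ring

lemma cos_tail_bound (x : ℝ) (k : ℕ) (h : x ^ 2 ≤ (2 * k + 1) * (2 * k + 2)) :
    |Real.cos x - ((-1 : ℝ) ^ k * x ^ (2 * k) / (2 * (2 * k).factorial) +
      ∑ i ∈ Finset.range k, (-1 : ℝ) ^ i * x ^ (2 * i) / (2 * i).factorial)| ≤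
      x ^ (2 * k) / (2 * (2 * k).factorial) := by
  set g : ℕ → ℝ := fun i => x ^ (2 * (k + i)) / (2 * (k + i)).factorial with hg
  have hgnn : ∀ i, 0 ≤ g i := by
    intro i
    apply div_nonneg _ (by positivity)
    rw [pow_mul]
    positivity
  have hgant : Antitone g := by
    apply antitone_nat_of_succ_le
    intro i
    have hfac : (0 : ℝ) < (2 * (k + i)).factorial := by positivity
    have hfac2 : (0 : ℝ) < (2 * (k + i + 1)).factorial := by positivity
    rw [hg]
    dsimp only
    show x ^ (2 * (k + i + 1)) / ((2 * (k + i + 1)).factorial : ℝ) ≤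
      x ^ (2 * (k + i)) / ((2 * (k + i)).factorial : ℝ)
    rw [div_le_div_iff₀ hfac2 hfac]
    have hexp : 2 * (k + i + 1) = 2 * (k + i) + 1 + 1 := by ring
    have hfe : ((2 * (k + i + 1)).factorial : ℝ)
        = (2 * (k + i)).factorial * ((2 * (k + i) + 1) * (2 * (k + i) + 2)) := by
      rw [hexp]
      push_cast [Nat.factorial_succ]
      ring
    have hxp : x ^ (2 * (k + i + 1)) = x ^ (2 * (k + i)) * x ^ 2 := by
      rw [← pow_add]; ring_nf
    rw [hfe, hxp]
    have hxk : (0 : ℝ) ≤ x ^ (2 * (k + i)) := by rw [pow_mul]; positivity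
    have hle : x ^ 2 ≤ (2 * (k + i) + 1) * (2 * (k + i) + 2) := by
      refine h.trans ?_
      have hi : (0:ℝ) ≤ (i:ℝ) := Nat.cast_nonneg i
      have hk0 : (0:ℝ) ≤ (k:ℝ) := Nat.cast_nonneg k
      push_cast
      nlinarith
    calc x ^ (2 * (k + i)) * x ^ 2 * (2 * (k + i)).factorial
        ≤ x ^ (2 * (k + i)) * ((2 * (k + i) + 1) * (2 * (k + i) + 2)) *
            (2 * (k + i)).factorial := by gcongr
      _ = x ^ (2 * (k + i)) * ((2 * (k + i)).factorial *
            ((2 * (k + i) + 1) * (2 * (k + i) + 2))) := by ring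
  -- the series
  set f : ℕ → ℝ := fun n => (-1 : ℝ) ^ n * x ^ (2 * n) / (2 * n).factorial with hf
  have hc : HasSum f (Real.cos x) := Real.hasSum_cos x
  have htail : HasSum (fun n => f (n + k))
      (Real.cos x - ∑ i ∈ Finset.range k, f i) := (hasSum_nat_add_iff' k).2 hc
  have hker : ∀ n, f (n + k) = (-1 : ℝ) ^ k * ((-1 : ℝ) ^ n * g n) := by
    intro n
    rw [hf, hg]
    dsimp only
    rw [pow_add]
    rw [Nat.add_comm n k]
    ring
  have htail2 : HasSum (fun n => (-1 : ℝ) ^ n * g n)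
      ((-1 : ℝ) ^ k * (Real.cos x - ∑ i ∈ Finset.range k, f i)) := by
    have := htail.mul_left ((-1 : ℝ) ^ k)
    have hsq : ∀ y : ℝ, (-1 : ℝ) ^ k * ((-1 : ℝ) ^ k * y) = y := by
      intro y
      rw [← mul_assoc, ← mul_pow]
      norm_num
    have heq : (fun n => (-1 : ℝ) ^ k * f (n + k)) = fun n => (-1 : ℝ) ^ n * g n := by
      funext n
      rw [hker n, hsq]
    rwa [heq] at this
  set L : ℝ := (-1 : ℝ) ^ k * (Real.cos x - ∑ i ∈ Finset.range k, f i) with hL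
  have htd : Filter.Tendsto (fun n => ∑ i ∈ Finset.range n, (-1 : ℝ) ^ i * g i)
      Filter.atTop (nhds L) := htail2.tendsto_sum_nat
  have h0L : 0 ≤ L := by
    have := hgant.alternating_series_le_tendsto htd 0
    simpa using this
  have hLg : L ≤ g 0 := by
    have := hgant.tendsto_le_alternating_series htd 0
    simpa using this
  have hg0 : g 0 = x ^ (2 * k) / (2 * k).factorial := by simp [hg]
  -- rewrite cos x
  have hcos : Real.cos x = ∑ i ∈ Finset.range k, f i + (-1 : ℝ) ^ k * L := by
    rw [hL, ← mul_assoc, ← mul_pow]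
    norm_num
  have hfac : (0 : ℝ) < (2 * k).factorial := by positivity
  have key : Real.cos x - ((-1 : ℝ) ^ k * x ^ (2 * k) / (2 * (2 * k).factorial) +
      ∑ i ∈ Finset.range k, (-1 : ℝ) ^ i * x ^ (2 * i) / (2 * i).factorial)
      = (-1 : ℝ) ^ k * (L - g 0 / 2) := by
    rw [hcos, hg0, hf]
    ring
  rw [key, abs_mul, abs_pow, abs_neg, abs_one, one_pow, one_mul]
  have habs : |L - g 0 / 2| ≤ g 0 / 2 := by
    rw [abs_le]
    constructor <;> [linarith; linarith]
  calc |L - g 0 / 2| ≤ g 0 / 2 := habs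
    _ = x ^ (2 * k) / (2 * (2 * k).factorial) := by rw [hg0]; ring

theorem cosine_approx_system :
    IsApproxSystem
      (A := Set.range ((↑) : ℚ → ℝ)) (B := Set.range ((↑) : ℚ → ℝ))
      (D := Set.univ) (θ := Real.cos)
      (⋃ k : ℕ, {q : ℝ × ℕ × ℝ × ℕ | ∃ a b : ℚ,
        q.1 = (a : ℝ) ∧ q.2.2.1 = (b : ℝ) ∧
        (a : ℝ) ^ 2 ≤ (2 * k + 1) * (2 * k + 2) ∧
        |(b : ℝ) - sigmaCos k a| + (a : ℝ) ^ (2 * k) / (2 * (2 * k).factorial) +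
          1 / (q.2.1 + 1) ≤ 1 / (q.2.2.2 + 1)}) := by
  constructor
  · rintro p hp
    simp only [Set.mem_iUnion, Set.mem_setOf_eq] at hp
    obtain ⟨k, a, b, ha, hb, -⟩ := hp
    exact ⟨⟨a, ha.symm⟩, ⟨b, hb.symm⟩⟩
  · intro ξ _
    constructor
    · rintro a m b n hmem hdist
      simp only [Set.mem_iUnion, Set.mem_setOf_eq] at hmem
      obtain ⟨k, a', b', ha, hb, hsq, hineq⟩ := hmem
      subst ha; subst hb
      have h1 : |(b' : ℝ) - Real.cos ξ| ≤ |(b' : ℝ) - sigmaCos k a'| +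
          |sigmaCos k a' - Real.cos (a' : ℝ)| + |Real.cos (a' : ℝ) - Real.cos ξ| := by
        have := abs_sub_le ((b' : ℝ)) (Real.cos (a' : ℝ)) (Real.cos ξ)
        have := abs_sub_le ((b' : ℝ)) (sigmaCos k a') (Real.cos (a' : ℝ))
        calc |(b' : ℝ) - Real.cos ξ| ≤ |(b' : ℝ) - Real.cos (a' : ℝ)| +
              |Real.cos (a' : ℝ) - Real.cos ξ| := abs_sub_le _ _ _
          _ ≤ |(b' : ℝ) - sigmaCos k a'| + |sigmaCos k a' - Real.cos (a' : ℝ)| +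
              |Real.cos (a' : ℝ) - Real.cos ξ| := by
            have := abs_sub_le ((b' : ℝ)) (sigmaCos k a') (Real.cos (a' : ℝ))
            linarith
      have h2 : |sigmaCos k a' - Real.cos (a' : ℝ)| ≤
          (a' : ℝ) ^ (2 * k) / (2 * (2 * k).factorial) := by
        rw [abs_sub_comm]
        exact cos_tail_bound (a' : ℝ) k hsq
      have h3 : |Real.cos (a' : ℝ) - Real.cos ξ| ≤ |(a' : ℝ) - ξ| :=
        cos_lipschitz _ _
      have hd : |(a' : ℝ) - ξ| < 1 / (m + 1) := by
        rwa [Real.dist_eq] at hdist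
      rw [Real.dist_eq]
      calc |(b' : ℝ) - Real.cos ξ| ≤ |(b' : ℝ) - sigmaCos k a'| +
            (a' : ℝ) ^ (2 * k) / (2 * (2 * k).factorial) + |(a' : ℝ) - ξ| := by linarith
        _ < |(b' : ℝ) - sigmaCos k a'| +
            (a' : ℝ) ^ (2 * k) / (2 * (2 * k).factorial) + 1 / (m + 1) := by linarith
        _ ≤ 1 / (n + 1) := hineq
    · intro n
      set ε : ℝ := 1 / (n + 1) with hε
      have hεpos : 0 < ε := by positivity
      obtain ⟨m, hm⟩ := exists_nat_gt (3 / ε)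
      refine ⟨m, ?_⟩
      rintro _ ⟨a, rfl⟩ _
      -- choose k
      have htend : Filter.Tendsto (fun k : ℕ => (a : ℝ) ^ (2 * k) / (2 * k).factorial)
          Filter.atTop (nhds 0) := by
        have hc : HasSum (fun i : ℕ => (-1 : ℝ) ^ i * (a : ℝ) ^ (2 * i) / (2 * i).factorial)
          (Real.cos (a : ℝ)) := Real.hasSum_cos _
        have hz := hc.summable.tendsto_atTop_zero
        have := hz.abs
        rw [abs_zero] at this
        refine this.congr fun i => ?_
        rw [abs_div, abs_mul, abs_pow, abs_neg, abs_one, one_pow, one_mul, abs_pow]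
        rw [pow_mul, pow_mul, sq_abs]
        rw [abs_of_nonneg (by positivity : (0:ℝ) ≤ ((2 * i).factorial : ℝ))]
      have hev1 : ∀ᶠ k : ℕ in Filter.atTop,
          (a : ℝ) ^ (2 * k) / (2 * k).factorial < 2 * ε / 3 :=
        htend.eventually_lt_const (by positivity)
      obtain ⟨N, hN⟩ := exists_nat_gt ((a : ℝ) ^ 2)
      have hev2 : ∀ᶠ k : ℕ in Filter.atTop,
          (a : ℝ) ^ 2 ≤ (2 * k + 1) * (2 * k + 2) := by
        filter_upwards [Filter.eventually_ge_atTop N] with k hk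
        have hNk : (N : ℝ) ≤ (k : ℝ) := by exact_mod_cast hk
        have hk0 : (0 : ℝ) ≤ (k : ℝ) := by positivity
        nlinarith
      obtain ⟨k, hk1, hk2⟩ := (hev1.and hev2).exists
      -- choose b
      obtain ⟨b, hb1, hb2⟩ := exists_rat_btwn
        (show sigmaCos k a < sigmaCos k a + ε / 3 by linarith)
      refine ⟨(b : ℝ), ⟨b, rfl⟩, ?_⟩
      simp only [Set.mem_iUnion, Set.mem_setOf_eq]
      refine ⟨k, a, b, rfl, rfl, hk2, ?_⟩
      have hbb : |(b : ℝ) - sigmaCos k a| < ε / 3 := by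
        rw [abs_lt]; constructor <;> linarith
      have hmε : 1 / ((m : ℝ) + 1) ≤ ε / 3 := by
        rw [div_le_div_iff₀ (by positivity) (by norm_num)]
        have : 3 / ε < (m : ℝ) := hm
        rw [div_lt_iff₀ hεpos] at this
        nlinarith
      have ht : (a : ℝ) ^ (2 * k) / (2 * (2 * k).factorial) < ε / 3 := by
        have hpos : (0 : ℝ) < ((2 * k).factorial : ℝ) := by positivity
        have : (a : ℝ) ^ (2 * k) / (2 * (2 * k).factorial)
            = ((a : ℝ) ^ (2 * k) / (2 * k).factorial) / 2 := by
          rw [div_div]; ring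
        rw [this]
        linarith
      linarith
end

section
/- With X = ℝ², d the sup metric, Y = ℝ, D = ℝ × (ℝ \ {0}), and θ(ξ₁,ξ₂) = ξ₁/ξ₂: a quadruple ((a₁,a₂),m,b,n) ∈ ℚ² × ℕ × ℚ × ℕ satisfies the condition 'for all (ξ₁,ξ₂) ∈ D, max(|a₁−ξ₁|,|a₂−ξ₂|) < 1/(m+1) implies |b − ξ₁/ξ₂| < 1/(n+1)' if and only if (m+1)·|a₂| > 1 and the four numbers ((m+1)a₁ ± 1)/((m+1)a₂ ± 1) all belong to the closed interval [b − 1/(n+1), b + 1/(n+1)]. -/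
private lemma corner_bound (a₁ a₂ b M N σ₁ σ₂ : ℝ) (hM : 0 < M) (hN : 0 < N)
    (hσ₁ : |σ₁| = 1) (hσ₂ : |σ₂| = 1)
    (ha : 1 < M * |a₂|)
    (H : ∀ ξ₁ ξ₂ : ℝ, ξ₂ ≠ 0 → max |a₁ - ξ₁| |a₂ - ξ₂| < 1 / M → |b - ξ₁ / ξ₂| < 1 / N) :
    |b - (M * a₁ + σ₁) / (M * a₂ + σ₂)| ≤ 1 / N := by
  set d : ℝ := M * |a₂| - 1 with hd
  have hd0 : 0 < d := by linarith
  have hden : ∀ s : ℝ, |s| ≤ 1 → d ≤ |M * a₂ + σ₂ * s| := by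
    intro s hs
    have h1 : |M * a₂| - |-(σ₂ * s)| ≤ |M * a₂ - -(σ₂ * s)| := abs_sub_abs_le_abs_sub _ _
    have h2 : |M * a₂| = M * |a₂| := by rw [abs_mul, abs_of_pos hM]
    have h3 : |-(σ₂ * s)| = |s| := by rw [abs_neg, abs_mul, hσ₂, one_mul]
    have h4 : M * a₂ - -(σ₂ * s) = M * a₂ + σ₂ * s := by ring
    rw [h2, h3, h4] at h1
    linarith
  have hDne : ∀ s : ℝ, |s| ≤ 1 → M * a₂ + σ₂ * s ≠ 0 := by
    intro s hs h
    have := hden s hs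
    rw [h, abs_zero] at this; linarith
  have key : ∀ s : ℝ, 0 < s → s < 1 →
      |b - (M * a₁ + σ₁ * s) / (M * a₂ + σ₂ * s)| < 1 / N := by
    intro s hs0 hs1
    have habs : |s| ≤ 1 := by rw [abs_of_pos hs0]; linarith
    have hD : d ≤ |M * a₂ + σ₂ * s| := hden s habs
    have hDne' := hDne s habs
    have hξ₂ne : (M * a₂ + σ₂ * s) / M ≠ 0 := div_ne_zero hDne' (ne_of_gt hM)
    have hdiv : ((M * a₁ + σ₁ * s) / M) / ((M * a₂ + σ₂ * s) / M)
        = (M * a₁ + σ₁ * s) / (M * a₂ + σ₂ * s) := by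
      field_simp
    have := H ((M * a₁ + σ₁ * s) / M) ((M * a₂ + σ₂ * s) / M) hξ₂ne ?_
    · rwa [hdiv] at this
    · have e1 : a₁ - (M * a₁ + σ₁ * s) / M = -(σ₁ * s) / M := by
        field_simp; ring
      have e2 : a₂ - (M * a₂ + σ₂ * s) / M = -(σ₂ * s) / M := by
        field_simp; ring
      have e3 : |(-(σ₁ * s)) / M| = s / M := by
        rw [abs_div, abs_neg, abs_mul, hσ₁, one_mul, abs_of_pos hM, abs_of_pos hs0]
      have e4 : |(-(σ₂ * s)) / M| = s / M := by
        rw [abs_div, abs_neg, abs_mul, hσ₂, one_mul, abs_of_pos hM, abs_of_pos hs0]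
      rw [e1, e2, e3, e4, max_self]
      gcongr
  -- difference estimate
  have hC1 : M * a₂ + σ₂ ≠ 0 := by
    have := hDne 1 (by norm_num)
    simpa using this
  set K : ℝ := M * |σ₁ * a₂ - σ₂ * a₁| / (d * d) with hK
  have hK0 : 0 ≤ K := by positivity
  have diff : ∀ s : ℝ, 0 < s → s < 1 →
      |(M * a₁ + σ₁ * s) / (M * a₂ + σ₂ * s) - (M * a₁ + σ₁) / (M * a₂ + σ₂)|
        ≤ (1 - s) * K := by
    intro s hs0 hs1
    have habs : |s| ≤ 1 := by rw [abs_of_pos hs0]; linarith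
    have hD : d ≤ |M * a₂ + σ₂ * s| := hden s habs
    have hDne' := hDne s habs
    have hD1 : d ≤ |M * a₂ + σ₂| := by
      have := hden 1 (by norm_num); simpa using this
    have eq1 : (M * a₁ + σ₁ * s) / (M * a₂ + σ₂ * s) - (M * a₁ + σ₁) / (M * a₂ + σ₂)
        = ((s - 1) * (M * (σ₁ * a₂ - σ₂ * a₁))) / ((M * a₂ + σ₂ * s) * (M * a₂ + σ₂)) := by
      rw [div_sub_div _ _ hDne' hC1]
      congr 1 <;> ring
    rw [eq1, abs_div, abs_mul, abs_mul, abs_mul]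
    have h1 : |s - 1| = 1 - s := by rw [abs_of_neg (by linarith)]; ring
    have h2 : |M| = M := abs_of_pos hM
    rw [h1, h2]
    rw [div_le_iff₀ (by positivity)]
    have hdd : d * d ≤ |M * a₂ + σ₂ * s| * |M * a₂ + σ₂| :=
      mul_le_mul hD hD1 hd0.le (abs_nonneg _)
    have expand : (1 - s) * K * (|M * a₂ + σ₂ * s| * |M * a₂ + σ₂|)
        ≥ (1 - s) * K * (d * d) := by
      apply mul_le_mul_of_nonneg_left hdd
      exact mul_nonneg (by linarith) hK0
    have hKdd : K * (d * d) = M * |σ₁ * a₂ - σ₂ * a₁| := by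
      rw [hK, div_mul_cancel₀ _ (mul_pos hd0 hd0).ne']
    nlinarith [abs_nonneg (σ₁ * a₂ - σ₂ * a₁)]
  -- now the epsilon argument
  apply le_of_forall_pos_le_add
  intro ε hε
  set δ : ℝ := min (1/2) (ε / (K + 1)) with hδ
  have hδ0 : 0 < δ := by
    apply lt_min (by norm_num)
    positivity
  have hδ1 : δ ≤ 1/2 := min_le_left _ _
  have hδ2 : δ ≤ ε / (K + 1) := min_le_right _ _
  have hs0 : 0 < 1 - δ := by linarith
  have hs1 : 1 - δ < 1 := by linarith
  have h1 := key (1 - δ) hs0 hs1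
  have h2 := diff (1 - δ) hs0 hs1
  have h3 : |b - (M * a₁ + σ₁) / (M * a₂ + σ₂)|
      ≤ |b - (M * a₁ + σ₁ * (1 - δ)) / (M * a₂ + σ₂ * (1 - δ))|
        + |(M * a₁ + σ₁ * (1 - δ)) / (M * a₂ + σ₂ * (1 - δ)) - (M * a₁ + σ₁) / (M * a₂ + σ₂)| := by
    have := abs_sub_le b ((M * a₁ + σ₁ * (1 - δ)) / (M * a₂ + σ₂ * (1 - δ)))
      ((M * a₁ + σ₁) / (M * a₂ + σ₂))
    convert this using 2 <;> ring_nf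
  have h4 : (1 - (1 - δ)) * K ≤ ε := by
    have : δ * (K + 1) ≤ ε := by
      rw [← le_div_iff₀ (by positivity)]; exact hδ2
    nlinarith
  calc |b - (M * a₁ + σ₁) / (M * a₂ + σ₂)| ≤ _ + _ := h3
    _ ≤ 1 / N + ε := by linarith
private lemma denom_pos_of_system (a₁ a₂ b M N : ℝ) (hM : 0 < M) (hN : 0 < N)
    (H : ∀ ξ₁ ξ₂ : ℝ, ξ₂ ≠ 0 → max |a₁ - ξ₁| |a₂ - ξ₂| < 1 / M → |b - ξ₁ / ξ₂| < 1 / N) :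
    1 < M * |a₂| := by
  by_contra hcon
  push_neg at hcon
  have h2 : |a₂| ≤ 1 / M := by rw [le_div_iff₀ hM]; linarith
  set c : ℝ := if a₁ = 0 then 1 / (2 * M) else a₁ with hc
  have hc0 : c ≠ 0 := by
    rw [hc]; split
    · positivity
    · assumption
  have hcnear : |a₁ - c| < 1 / M := by
    rw [hc]; split
    · rename_i h
      rw [h]
      rw [zero_sub, abs_neg, abs_of_pos (by positivity)]
      rw [div_lt_div_iff₀ (by positivity) hM]
      nlinarith
    · simp only [sub_self, abs_zero]; positivity
  set X : ℝ := |b| + 1 / N + 1 with hX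
  have hX0 : 0 < X := by positivity
  set t : ℝ := min (1 / (2 * M)) (|c| / X) with ht
  have ht0 : 0 < t := lt_min (by positivity) (by positivity)
  have ht1 : t ≤ 1 / (2 * M) := min_le_left _ _
  have ht2 : t ≤ |c| / X := min_le_right _ _
  have hMhalf : 1 / (2 * M) < 1 / M := by
    rw [div_lt_div_iff₀ (by positivity) hM]; nlinarith
  set ξ₂ : ℝ := if 0 ≤ a₂ then t else -t with hξ₂
  have hξ₂ne : ξ₂ ≠ 0 := by
    rw [hξ₂]; split
    · exact ne_of_gt ht0
    · exact ne_of_lt (by linarith)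
  have hξ₂abs : |ξ₂| = t := by
    rw [hξ₂]; split
    · exact abs_of_pos ht0
    · rw [abs_neg]; exact abs_of_pos ht0
  have hnear : |a₂ - ξ₂| < 1 / M := by
    rw [hξ₂, abs_lt]; split
    · rename_i h
      have : a₂ ≤ 1 / M := le_trans (le_abs_self _) h2
      constructor <;> linarith
    · rename_i h
      push_neg at h
      have : -(1 / M) ≤ a₂ := by
        have := neg_abs_le a₂
        linarith [neg_le_neg h2]
      constructor <;> linarith
  have hkey := H c ξ₂ hξ₂ne (max_lt hcnear hnear)
  have hbig : X ≤ |c / ξ₂| := by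
    rw [abs_div, hξ₂abs, le_div_iff₀ ht0]
    calc X * t ≤ X * (|c| / X) := by
          exact mul_le_mul_of_nonneg_left ht2 hX0.le
      _ = |c| := by field_simp
  have htri : |c / ξ₂| - |b| ≤ |b - c / ξ₂| := by
    have := abs_sub_abs_le_abs_sub (c / ξ₂) b
    rwa [abs_sub_comm] at this
  rw [hX] at hbig
  linarith
private lemma system_of_corners (a₁ a₂ b M N : ℝ) (hM : 0 < M) (hN : 0 < N)
    (ha : 1 < M * |a₂|)
    (h1l : b - 1 / N ≤ (M * a₁ + 1) / (M * a₂ + 1)) (h1u : (M * a₁ + 1) / (M * a₂ + 1) ≤ b + 1 / N)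
    (h2l : b - 1 / N ≤ (M * a₁ + 1) / (M * a₂ - 1)) (h2u : (M * a₁ + 1) / (M * a₂ - 1) ≤ b + 1 / N)
    (h3l : b - 1 / N ≤ (M * a₁ - 1) / (M * a₂ + 1)) (h3u : (M * a₁ - 1) / (M * a₂ + 1) ≤ b + 1 / N)
    (h4l : b - 1 / N ≤ (M * a₁ - 1) / (M * a₂ - 1)) (h4u : (M * a₁ - 1) / (M * a₂ - 1) ≤ b + 1 / N)
    (ξ₁ ξ₂ : ℝ) (hξ : ξ₂ ≠ 0) (hmax : max |a₁ - ξ₁| |a₂ - ξ₂| < 1 / M) :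
    |b - ξ₁ / ξ₂| < 1 / N := by
  have h₁ := lt_of_le_of_lt (le_max_left |a₁ - ξ₁| |a₂ - ξ₂|) hmax
  have h₂ := lt_of_le_of_lt (le_max_right |a₁ - ξ₁| |a₂ - ξ₂|) hmax
  rw [abs_lt] at h₁ h₂
  have hMne := hM.ne'
  have kk : ∀ x y : ℝ, x - y < 1 / M → M * x - M * y < 1 := by
    intro x y h
    have := mul_lt_mul_of_pos_left h hM
    rw [mul_one_div, div_self hMne] at this
    linarith [this]
  have hx1 : M * a₁ - 1 < M * ξ₁ := by have := kk a₁ ξ₁ h₁.2; linarith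
  have hx2 : M * ξ₁ < M * a₁ + 1 := by have := kk ξ₁ a₁ (by linarith [h₁.1]); linarith
  have hy1 : M * a₂ - 1 < M * ξ₂ := by have := kk a₂ ξ₂ h₂.2; linarith
  have hy2 : M * ξ₂ < M * a₂ + 1 := by have := kk ξ₂ a₂ (by linarith [h₂.1]); linarith
  clear hmax h₁ h₂ kk
  rw [abs_lt]
  rcases le_or_gt 0 a₂ with hsgn | hsgn
  · -- positive case
    have hP : 1 < M * a₂ := by rwa [abs_of_nonneg hsgn] at ha
    have hd1 : 0 < M * a₂ + 1 := by linarith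
    have hd2 : 0 < M * a₂ - 1 := by linarith
    have hξp : 0 < ξ₂ := by
      by_contra h
      push_neg at h
      nlinarith [mul_nonpos_of_nonneg_of_nonpos hM.le h]
    have c1u := (div_le_iff₀ hd1).1 h1u
    have c1l := (le_div_iff₀ hd1).1 h1l
    have c2u := (div_le_iff₀ hd2).1 h2u
    have c3l := (le_div_iff₀ hd1).1 h3l
    have c4l := (le_div_iff₀ hd2).1 h4l
    have up : ξ₁ / ξ₂ < b + 1 / N := by
      rw [div_lt_iff₀ hξp]
      have key : M * ξ₁ < M * ((b + 1 / N) * ξ₂) := by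
        rcases le_or_gt 0 (b + 1 / N) with hB | hB
        · have := mul_le_mul_of_nonneg_left (show M * a₂ - 1 ≤ M * ξ₂ by linarith) hB
          linarith
        · have := mul_lt_mul_of_neg_left (show M * ξ₂ < M * a₂ + 1 by linarith) hB
          linarith
      exact lt_of_mul_lt_mul_left key hM.le
    have lo : b - 1 / N < ξ₁ / ξ₂ := by
      rw [lt_div_iff₀ hξp]
      have key : M * ((b - 1 / N) * ξ₂) < M * ξ₁ := by
        rcases le_or_gt 0 (b - 1 / N) with hB | hB
        · have := mul_le_mul_of_nonneg_left (show M * ξ₂ ≤ M * a₂ + 1 by linarith) hB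
          linarith
        · have := mul_lt_mul_of_neg_left (show M * a₂ - 1 < M * ξ₂ by linarith) hB
          linarith
      exact lt_of_mul_lt_mul_left key hM.le
    constructor <;> linarith
  · -- negative case
    have hQ : M * a₂ < -1 := by
      rw [abs_of_neg hsgn] at ha
      nlinarith
    have hd1 : M * a₂ + 1 < 0 := by linarith
    have hd2 : M * a₂ - 1 < 0 := by linarith
    have hξn : ξ₂ < 0 := by
      by_contra h
      push_neg at h
      nlinarith [mul_nonneg hM.le h]
    have c1l := (le_div_iff_of_neg hd1).1 h1l
    have c2l := (le_div_iff_of_neg hd2).1 h2l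
    have c3u := (div_le_iff_of_neg hd1).1 h3u
    have c4u := (div_le_iff_of_neg hd2).1 h4u
    have up : ξ₁ / ξ₂ < b + 1 / N := by
      rw [div_lt_iff_of_neg hξn]
      have key : M * ((b + 1 / N) * ξ₂) < M * ξ₁ := by
        rcases le_or_gt 0 (b + 1 / N) with hB | hB
        · have := mul_le_mul_of_nonneg_left (show M * ξ₂ ≤ M * a₂ + 1 by linarith) hB
          linarith
        · have := mul_lt_mul_of_neg_left (show M * a₂ - 1 < M * ξ₂ by linarith) hB
          linarith
      exact lt_of_mul_lt_mul_left key hM.le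
    have lo : b - 1 / N < ξ₁ / ξ₂ := by
      rw [lt_div_iff_of_neg hξn]
      have key : M * ξ₁ < M * ((b - 1 / N) * ξ₂) := by
        rcases le_or_gt 0 (b - 1 / N) with hB | hB
        · have := mul_le_mul_of_nonneg_left (show M * a₂ - 1 ≤ M * ξ₂ by linarith) hB
          linarith
        · have := mul_lt_mul_of_neg_left (show M * ξ₂ < M * a₂ + 1 by linarith) hB
          linarith
      exact lt_of_mul_lt_mul_left key hM.le
    constructor <;> linarith

theorem division_maximal_system_characterization
    (a₁ a₂ b : ℚ) (m n : ℕ) :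
    (∀ ξ₁ ξ₂ : ℝ, ξ₂ ≠ 0 →
        max |(a₁ : ℝ) - ξ₁| |(a₂ : ℝ) - ξ₂| < 1 / (m + 1) →
        |(b : ℝ) - ξ₁ / ξ₂| < 1 / (n + 1)) ↔
      (((m : ℝ) + 1) * |(a₂ : ℝ)| > 1 ∧
        (((m : ℝ) + 1) * a₁ + 1) / (((m : ℝ) + 1) * a₂ + 1) ∈
          Set.Icc ((b : ℝ) - 1 / (n + 1)) ((b : ℝ) + 1 / (n + 1)) ∧
        (((m : ℝ) + 1) * a₁ + 1) / (((m : ℝ) + 1) * a₂ - 1) ∈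
          Set.Icc ((b : ℝ) - 1 / (n + 1)) ((b : ℝ) + 1 / (n + 1)) ∧
        (((m : ℝ) + 1) * a₁ - 1) / (((m : ℝ) + 1) * a₂ + 1) ∈
          Set.Icc ((b : ℝ) - 1 / (n + 1)) ((b : ℝ) + 1 / (n + 1)) ∧
        (((m : ℝ) + 1) * a₁ - 1) / (((m : ℝ) + 1) * a₂ - 1) ∈
          Set.Icc ((b : ℝ) - 1 / (n + 1)) ((b : ℝ) + 1 / (n + 1))) := by
  have hM : (0:ℝ) < (m:ℝ) + 1 := by positivity
  have hN : (0:ℝ) < (n:ℝ) + 1 := by positivity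
  constructor
  · intro H
    have ha := denom_pos_of_system (a₁:ℝ) (a₂:ℝ) (b:ℝ) ((m:ℝ)+1) ((n:ℝ)+1) hM hN H
    refine ⟨ha, ?_, ?_, ?_, ?_⟩
    · have h := corner_bound (a₁:ℝ) (a₂:ℝ) (b:ℝ) ((m:ℝ)+1) ((n:ℝ)+1) 1 1 hM hN
        (abs_one) (abs_one) ha H
      rw [abs_le] at h
      rw [Set.mem_Icc]
      constructor <;> [linarith [h.2]; linarith [h.1]]
    · have h := corner_bound (a₁:ℝ) (a₂:ℝ) (b:ℝ) ((m:ℝ)+1) ((n:ℝ)+1) 1 (-1) hM hN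
        (abs_one) (by norm_num) ha H
      rw [show ((m:ℝ)+1) * (a₂:ℝ) + (-1) = ((m:ℝ)+1) * (a₂:ℝ) - 1 from by ring] at h
      rw [abs_le] at h
      rw [Set.mem_Icc]
      constructor <;> [linarith [h.2]; linarith [h.1]]
    · have h := corner_bound (a₁:ℝ) (a₂:ℝ) (b:ℝ) ((m:ℝ)+1) ((n:ℝ)+1) (-1) 1 hM hN
        (by norm_num) (abs_one) ha H
      rw [show ((m:ℝ)+1) * (a₁:ℝ) + (-1) = ((m:ℝ)+1) * (a₁:ℝ) - 1 from by ring] at h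
      rw [abs_le] at h
      rw [Set.mem_Icc]
      constructor <;> [linarith [h.2]; linarith [h.1]]
    · have h := corner_bound (a₁:ℝ) (a₂:ℝ) (b:ℝ) ((m:ℝ)+1) ((n:ℝ)+1) (-1) (-1) hM hN
        (by norm_num) (by norm_num) ha H
      rw [show ((m:ℝ)+1) * (a₁:ℝ) + (-1) = ((m:ℝ)+1) * (a₁:ℝ) - 1 from by ring,
        show ((m:ℝ)+1) * (a₂:ℝ) + (-1) = ((m:ℝ)+1) * (a₂:ℝ) - 1 from by ring] at h
      rw [abs_le] at h
      rw [Set.mem_Icc]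
      constructor <;> [linarith [h.2]; linarith [h.1]]
  · rintro ⟨ha, h1, h2, h3, h4⟩
    intro ξ₁ ξ₂ hξ hmax
    rw [Set.mem_Icc] at h1 h2 h3 h4
    exact system_of_corners (a₁:ℝ) (a₂:ℝ) (b:ℝ) ((m:ℝ)+1) ((n:ℝ)+1) hM hN ha
      h1.1 h1.2 h2.1 h2.2 h3.1 h3.2 h4.1 h4.2 ξ₁ ξ₂ hξ hmax
end

section
/- Let θ : D → ℝ with D ⊆ ℝ, θ the restriction of the constant zero function to D, where ℕ ⊆ ℝ is viewed with the usual metric, A = B = ℕ (as a subset of itself with the discrete-induced metric |a−b|), X = Y = ℕ. Let M be the maximal A,B-approximation system for θ, i.e., the set of (a,m,b,n) ∈ ℕ⁴ such that for all ξ ∈ D, |a−ξ| < 1/(m+1) implies |b−θ(ξ)| < 1/(n+1). Then for every a ∈ ℕ: (a,0,1,0) ∈ M if and only if a ∉ D. -/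
theorem nat_maximal_system_not_re (D : Set ℕ)
    (M : Set (ℕ × ℕ × ℕ × ℕ))
    (hM : M = {q : ℕ × ℕ × ℕ × ℕ | ∀ ξ ∈ D,
      |(q.1 : ℝ) - (ξ : ℝ)| < 1 / (q.2.1 + 1) →
        |(q.2.2.1 : ℝ) - 0| < 1 / (q.2.2.2 + 1)}) :
    ∀ a : ℕ, (a, 0, 1, 0) ∈ M ↔ a ∉ D := by
  subst hM
  intro a
  simp only [Set.mem_setOf_eq]
  norm_num
  constructor
  · intro h ha
    have := h a ha
    simp at this
    linarith
  · intro h ξ hξ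
    have hne : a ≠ ξ := fun e => h (e ▸ hξ)
    have h1 : (1 : ℤ) ≤ |(a : ℤ) - ξ| := Int.one_le_abs (sub_ne_zero.mpr (by exact_mod_cast hne))
    have h2 : ((|(a : ℤ) - ξ| : ℤ) : ℝ) = |(a : ℝ) - ξ| := by
      push_cast [Int.cast_abs]
      ring_nf
    calc (1:ℝ) = ((1:ℤ):ℝ) := by norm_num
      _ ≤ ((|(a : ℤ) - ξ| : ℤ) : ℝ) := by exact_mod_cast h1
      _ = |(a : ℝ) - ξ| := h2
end
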